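/- For fixed positive definite matrices Q^(1),…,Q^(K), the function M ↦ Σ_k LogDet(Q^(k), M) over the positive definite cone is minimized at the arithmetic mean M = (1/K) Σ_k Q^(k). -/

import Mathlib

noncomputable def logDetDiv {n : Type*} [Fintype n] [DecidableEq n]
    (Q M : Matrix n n ℝ) : ℝ :=
  (1 / 2) * (Real.log M.det - Real.log Q.det + (M⁻¹ * (Q - M)).trace)

open Matrix Finset

lemma trace_eq_sum_eig {n : Type*} [Fintype n] [DecidableEq n] {B : Matrix n n ℝ}
    (hB : B.IsHermitian) : B.trace = ∑ i, hB.eigenvalues i := by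
  conv_lhs => rw [hB.spectral_theorem, Unitary.conjStarAlgAut_apply]
  rw [Matrix.trace_mul_cycle, mul_assoc]
  have : (star (hB.eigenvectorUnitary : Matrix n n ℝ)) * (hB.eigenvectorUnitary : Matrix n n ℝ) = 1 := by
    exact (Unitary.mem_iff.mp hB.eigenvectorUnitary.2).1
  rw [← mul_assoc, this, one_mul, Matrix.trace_diagonal]
  simp

lemma logdet_le_trace {n : Type*} [Fintype n] [DecidableEq n] {B : Matrix n n ℝ}
    (hB : B.PosSemidef) (hdet : 0 < B.det) :
    Real.log B.det ≤ B.trace - Fintype.card n := by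
  have hdp : B.det = ∏ i, hB.1.eigenvalues i := by
    rw [hB.1.det_eq_prod_eigenvalues]; simp
  have heig : ∀ i, 0 < hB.1.eigenvalues i := by
    intro i
    rcases (hB.eigenvalues_nonneg i).lt_or_eq with h | h
    · exact h
    · exfalso
      rw [hdp] at hdet
      exact absurd (Finset.prod_eq_zero (Finset.mem_univ i) h.symm) (by positivity)
  rw [hdp, Real.log_prod (fun i _ => (heig i).ne'), trace_eq_sum_eig hB.1]
  have : ∀ i ∈ Finset.univ, Real.log (hB.1.eigenvalues i) ≤ hB.1.eigenvalues i - 1 :=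
    fun i _ => Real.log_le_sub_one_of_pos (heig i)
  calc ∑ i, Real.log (hB.1.eigenvalues i) ≤ ∑ i, (hB.1.eigenvalues i - 1) :=
        Finset.sum_le_sum this
    _ = (∑ i, hB.1.eigenvalues i) - Fintype.card n := by
        rw [Finset.sum_sub_distrib]; simp [Finset.card_univ]

open scoped MatrixOrder in
lemma logdet_key {n : Type*} [Fintype n] [DecidableEq n] {A M : Matrix n n ℝ}
    (hA : A.PosDef) (hM : M.PosDef) :
    Real.log A.det ≤ Real.log M.det + (M⁻¹ * A).trace - Fintype.card n := by
  have hMi : M⁻¹.PosDef := hM.inv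
  set S := CFC.sqrt M⁻¹ with hSdef
  have hS : S.PosSemidef := Matrix.nonneg_iff_posSemidef.mp (CFC.sqrt_nonneg _)
  have hSS : S * S = M⁻¹ := CFC.sqrt_mul_sqrt_self _ hMi.posSemidef.nonneg
  have hB : (S * A * S).PosSemidef := by
    have := hA.posSemidef.mul_mul_conjTranspose_same S
    rwa [hS.1.eq] at this
  have hdetS : S.det * S.det = M⁻¹.det := by rw [← Matrix.det_mul, hSS]
  have hdetB : (S * A * S).det = M⁻¹.det * A.det := by
    rw [Matrix.det_mul, Matrix.det_mul, ← hdetS]; ring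
  have hdetBpos : 0 < (S * A * S).det := by
    rw [hdetB]; exact mul_pos hMi.det_pos hA.det_pos
  have htr : (S * A * S).trace = (M⁻¹ * A).trace := by
    rw [Matrix.trace_mul_cycle, hSS]
  have key := logdet_le_trace hB hdetBpos
  rw [hdetB, htr, Real.log_mul hMi.det_pos.ne' hA.det_pos.ne'] at key
  have hinv : Real.log M⁻¹.det = - Real.log M.det := by
    rw [Matrix.det_nonsing_inv, Ring.inverse_eq_inv', Real.log_inv]
  linarith

lemma posdef_mean {ℓ K : ℕ} (hK : 0 < K) (Q : Fin K → Matrix (Fin ℓ) (Fin ℓ) ℝ)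
    (hQ : ∀ k, (Q k).PosDef) : ((K : ℝ)⁻¹ • ∑ k, Q k).PosDef := by
  have hcpos : (0:ℝ) < (K:ℝ)⁻¹ := by positivity
  have hsum : (∑ k, Q k).PosDef := by
    refine Matrix.PosDef.of_dotProduct_mulVec_pos ?_ (fun x hx => ?_)
    · show (∑ k, Q k)ᴴ = ∑ k, Q k
      rw [Matrix.conjTranspose_sum]
      exact Finset.sum_congr rfl fun k _ => (hQ k).1.eq
    · have h1 : (∑ k, Q k) *ᵥ x = ∑ k, (Q k *ᵥ x) :=
        map_sum (Matrix.mulVec.addMonoidHomLeft x) Q Finset.univ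
      have h2 : star x ⬝ᵥ ((∑ k, Q k) *ᵥ x) = ∑ k, star x ⬝ᵥ (Q k *ᵥ x) := by
        rw [h1]
        simp only [dotProduct, Finset.sum_apply, Finset.mul_sum]
        exact Finset.sum_comm
      rw [h2]
      have : Nonempty (Fin K) := ⟨⟨0, hK⟩⟩
      exact Finset.sum_pos (fun k _ => (hQ k).dotProduct_mulVec_pos hx) Finset.univ_nonempty
  refine Matrix.PosDef.of_dotProduct_mulVec_pos ?_ (fun x hx => ?_)
  · show ((K:ℝ)⁻¹ • ∑ k, Q k)ᴴ = (K:ℝ)⁻¹ • ∑ k, Q k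
    rw [Matrix.conjTranspose_smul, hsum.1.eq]
    simp
  · rw [Matrix.smul_mulVec, dotProduct_smul]
    exact mul_pos hcpos (hsum.dotProduct_mulVec_pos hx)

lemma expand_sum {ℓ K : ℕ} (Q : Fin K → Matrix (Fin ℓ) (Fin ℓ) ℝ)
    (N : Matrix (Fin ℓ) (Fin ℓ) ℝ) :
    ∑ k, logDetDiv (Q k) N = (1/2) * ((K:ℝ) * Real.log N.det - (∑ k, Real.log (Q k).det)
      + ((N⁻¹ * ∑ k, Q k).trace - (K:ℝ) * (N⁻¹ * N).trace)) := by
  simp only [logDetDiv, Matrix.mul_sub, Matrix.trace_sub]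
  rw [← Finset.mul_sum]
  congr 1
  rw [Finset.mul_sum, Matrix.trace_sum, Finset.sum_add_distrib, Finset.sum_sub_distrib,
    Finset.sum_sub_distrib, Finset.sum_const, Finset.sum_const, Finset.card_univ,
    Fintype.card_fin]
  ring

theorem sum_logDetDiv_minimized_at_mean {ℓ K : ℕ} (hK : 0 < K)
    (Q : Fin K → Matrix (Fin ℓ) (Fin ℓ) ℝ) (hQ : ∀ k, (Q k).PosDef)
    (M : Matrix (Fin ℓ) (Fin ℓ) ℝ) (hM : M.PosDef) :
    ∑ k, logDetDiv (Q k) ((K : ℝ)⁻¹ • ∑ k, Q k) ≤ ∑ k, logDetDiv (Q k) M := by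
  have hcpos : (0:ℝ) < (K:ℝ) := by exact_mod_cast hK
  set A := (K:ℝ)⁻¹ • ∑ k, Q k with hAdef
  have hA : A.PosDef := posdef_mean hK Q hQ
  have hSA : (∑ k, Q k) = (K:ℝ) • A := by
    rw [hAdef, smul_smul, mul_inv_cancel₀ hcpos.ne', one_smul]
  have hAinv : A⁻¹ * A = 1 := Matrix.nonsing_inv_mul A hA.det_pos.ne'.isUnit
  have hMinv : M⁻¹ * M = 1 := Matrix.nonsing_inv_mul M hM.det_pos.ne'.isUnit
  rw [expand_sum, expand_sum]
  have htrA : (A⁻¹ * ∑ k, Q k).trace = (K:ℝ) * (Fintype.card (Fin ℓ)) := by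
    rw [hSA, Matrix.mul_smul, Matrix.trace_smul, hAinv, Matrix.trace_one]
    simp
  have htrM : (M⁻¹ * ∑ k, Q k).trace = (K:ℝ) * (M⁻¹ * A).trace := by
    rw [hSA, Matrix.mul_smul, Matrix.trace_smul]; simp
  rw [htrA, hAinv, hMinv, Matrix.trace_one, htrM]
  have key := logdet_key hA hM
  nlinarith [mul_le_mul_of_nonneg_left key hcpos.le]
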